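/- Let T be a finite tree on k+1 ≥ 2 vertices with edge set E(T), let (X, μ) be a probability space, and let K : X × X → [0,∞) be a symmetric measurable kernel. Suppose there exist a measurable set G ⊆ X with μ(G) > 0 and constants 0 < a ≤ b such that a ≤ ∫_G K(x,y) dμ(y) ≤ b for every x ∈ G. Then the multilinear integral ∫_{G^{k+1}} ∏_{(i,j) ∈ E(T)} K(x^i, x^j) dμ(x¹)⋯dμ(x^{k+1}) is bounded below by a^k · μ(G) and above by b^k · μ(G). -/
import Mathlib

open SimpleGraph

lemma tree_exists_leaf {n : ℕ} (T : SimpleGraph (Fin (n + 2))) [DecidableRel T.Adj]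
    (hT : T.IsTree) : ∃ v u, T.Adj v u ∧ ∀ w, T.Adj v w → w = u := by
  classical
  have hcard := hT.card_edgeFinset
  have hsum := T.sum_degrees_eq_twice_card_edges
  have hpos : ∀ v : Fin (n + 2), 0 < T.degree v := by
    intro v
    rw [degree_pos_iff_exists_adj]
    obtain ⟨w, hw⟩ := exists_ne v
    obtain ⟨p⟩ := hT.isConnected.preconnected v w
    cases p with
    | nil => exact absurd rfl hw.symm
    | cons h _ => exact ⟨_, h⟩
  have hv : ∃ v : Fin (n + 2), T.degree v ≤ 1 := by
    by_contra h
    push_neg at h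
    have : ∑ v : Fin (n + 2), 2 ≤ ∑ v : Fin (n + 2), T.degree v :=
      Finset.sum_le_sum fun v _ => h v
    simp only [Finset.sum_const, Finset.card_univ, Fintype.card_fin, smul_eq_mul] at this
    rw [hsum] at this
    simp only [Fintype.card_fin] at hcard
    omega
  obtain ⟨v, hv1⟩ := hv
  have hdeg : T.degree v = 1 := le_antisymm hv1 (hpos v)
  rw [← card_neighborFinset_eq_degree, Finset.card_eq_one] at hdeg
  obtain ⟨u, hu⟩ := hdeg
  refine ⟨v, u, ?_, ?_⟩
  · rw [← mem_neighborFinset, hu]; exact Finset.mem_singleton_self u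
  · intro w hw
    have := (mem_neighborFinset T v w).2 hw
    rw [hu, Finset.mem_singleton] at this; exact this

lemma leaf_edge_mem_edges {n : ℕ} {T : SimpleGraph (Fin n)} {v u : Fin n}
    (hleaf : ∀ w, T.Adj v w → w = u) :
    ∀ {y : Fin n} (q : T.Walk v y), v ≠ y → s(v, u) ∈ q.edges := by
  intro y q hvy
  cases q with
  | nil => exact absurd rfl hvy
  | cons h t =>
    rename_i z
    have hz : z = u := hleaf _ h
    subst hz
    simp [Walk.edges_cons]

lemma path_avoids_leaf {n : ℕ} {T : SimpleGraph (Fin n)} {v u : Fin n}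
    (hleaf : ∀ w, T.Adj v w → w = u) {x y : Fin n} (p : T.Walk x y) (hp : p.IsPath)
    (hx : x ≠ v) (hy : y ≠ v) : v ∉ p.support := by
  intro hv
  have h1 : s(v, u) ∈ (p.dropUntil v hv).edges :=
    leaf_edge_mem_edges hleaf _ (fun h => hy h.symm)
  have h2 : s(v, u) ∈ (p.takeUntil v hv).edges := by
    have := leaf_edge_mem_edges hleaf (p.takeUntil v hv).reverse (fun h => hx h.symm)
    rwa [Walk.edges_reverse, List.mem_reverse] at this
  have hnd : p.edges.Nodup := hp.isTrail.edges_nodup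
  rw [← Walk.take_spec p hv, Walk.edges_append] at hnd
  exact List.disjoint_of_nodup_append hnd h2 h1

lemma comap_isTree {n : ℕ} (T : SimpleGraph (Fin (n + 2))) [DecidableRel T.Adj]
    (hT : T.IsTree) (v u : Fin (n + 2)) (hleaf : ∀ w, T.Adj v w → w = u) :
    (T.comap v.succAbove).IsTree := by
  let hom : T.comap v.succAbove →g T := ⟨v.succAbove, id⟩
  have homcoe : ⇑hom = v.succAbove := rfl
  constructor
  · constructor
    intro i j
    obtain ⟨p, hp, -⟩ := hT.existsUnique_path (v.succAbove i) (v.succAbove j)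
    have hav : v ∉ p.support :=
      path_avoids_leaf hleaf p hp (Fin.succAbove_ne v i) (Fin.succAbove_ne v j)
    clear hp
    -- lift the walk
    suffices h : ∀ {x y : Fin (n + 2)} (q : T.Walk x y), v ∉ q.support →
        ∀ (i j : Fin (n + 1)), v.succAbove i = x → v.succAbove j = y →
          (T.comap v.succAbove).Reachable i j from h p hav i j rfl rfl
    intro x y q
    induction q with
    | nil =>
      intro _ i j hi hj
      cases Fin.succAbove_right_injective (hi.trans hj.symm)
      exact Reachable.refl _
    | cons h q ih =>
      rename_i x' z' y'
      intro hs i j hi hj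
      rw [Walk.support_cons] at hs
      simp only [List.mem_cons, not_or] at hs
      have hz : z' ≠ v := by
        intro hzv
        exact hs.2 (hzv ▸ q.start_mem_support)
      obtain ⟨m, hm⟩ := Fin.exists_succAbove_eq hz
      have hadj : (T.comap v.succAbove).Adj i m := by
        simp only [comap_adj, hi, hm]
        exact h
      exact hadj.reachable.trans (ih hs.2 m j hm hj)
  · intro i c hc
    have hinj : Function.Injective (⇑hom) := by
      rw [homcoe]; exact Fin.succAbove_right_injective (p := v)
    exact hT.IsAcyclic (c.map hom) ((Walk.map_isCycle_iff_of_injective hinj).2 hc)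

open MeasureTheory ENNReal

theorem tree_integral_bounds {X : Type} [MeasurableSpace X] (μ : Measure X)
    [IsProbabilityMeasure μ]
    (K : X → X → ℝ≥0∞) (hK : Measurable (Function.uncurry K))
    (hsym : ∀ x y, K x y = K y x)
    (G : Set X) (hG : MeasurableSet G)
    (a b : ℝ≥0∞) (hab : a ≤ b)
    (hbound : ∀ x ∈ G, a ≤ (∫⁻ y in G, K x y ∂μ) ∧ (∫⁻ y in G, K x y ∂μ) ≤ b) :
    ∀ (k : ℕ) (T : SimpleGraph (Fin (k + 1))) [DecidableRel T.Adj], T.IsTree →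
      a ^ k * μ G ≤
          (∫⁻ x in Set.univ.pi fun _ : Fin (k + 1) => G,
            ∏ p ∈ Finset.univ.filter
                (fun p : Fin (k + 1) × Fin (k + 1) => p.1 < p.2 ∧ T.Adj p.1 p.2),
              K (x p.1) (x p.2) ∂(Measure.pi fun _ : Fin (k + 1) => μ)) ∧
        (∫⁻ x in Set.univ.pi fun _ : Fin (k + 1) => G,
            ∏ p ∈ Finset.univ.filter
                (fun p : Fin (k + 1) × Fin (k + 1) => p.1 < p.2 ∧ T.Adj p.1 p.2),
              K (x p.1) (x p.2) ∂(Measure.pi fun _ : Fin (k + 1) => μ)) ≤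
          b ^ k * μ G := by
  intro k
  induction k with
  | zero =>
    intro T _ _
    have hempty : (Finset.univ.filter
        (fun p : Fin 1 × Fin 1 => p.1 < p.2 ∧ T.Adj p.1 p.2)) = ∅ := by
      apply Finset.filter_false_of_mem
      intro p _
      rintro ⟨hlt, -⟩
      exact absurd (Subsingleton.elim p.1 p.2) hlt.ne
    rw [hempty]
    simp only [Finset.prod_empty, pow_zero, one_mul]
    rw [setLIntegral_one, Measure.pi_pi]
    simp
  | succ k ih =>
    intro T instT hT
    obtain ⟨v, u, hadj, hleaf⟩ := tree_exists_leaf T hT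
    have hne : u ≠ v := hadj.ne'
    obtain ⟨m, hm⟩ := Fin.exists_succAbove_eq hne
    haveI instT' : DecidableRel (T.comap v.succAbove).Adj := fun i j => instT _ _
    have hT' : (T.comap v.succAbove).IsTree := comap_isTree T hT v u hleaf
    set A : Finset (Fin (k + 1 + 1) × Fin (k + 1 + 1)) := Finset.univ.filter
      (fun p : Fin (k + 1 + 1) × Fin (k + 1 + 1) => p.1 < p.2 ∧ T.Adj p.1 p.2) with hA
    set A' : Finset (Fin (k + 1) × Fin (k + 1)) := Finset.univ.filter
      (fun p : Fin (k + 1) × Fin (k + 1) => p.1 < p.2 ∧ (T.comap v.succAbove).Adj p.1 p.2)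
      with hA'
    set P : (Fin (k + 1) → X) → ℝ≥0∞ := fun x => ∏ p ∈ A', K (x p.1) (x p.2) with hPdef
    set p0 : Fin (k + 1 + 1) × Fin (k + 1 + 1) :=
      if u < v then (u, v) else (v, u) with hp0def
    set emb : Fin (k + 1) × Fin (k + 1) → Fin (k + 1 + 1) × Fin (k + 1 + 1) :=
      fun q => (v.succAbove q.1, v.succAbove q.2) with hembdef
    -- the edge set splits off the leaf edge
    have hAeq : A = insert p0 (A'.image emb) := by
      ext p
      simp only [hA, hA', Finset.mem_insert, Finset.mem_image, Finset.mem_filter,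
        Finset.mem_univ, true_and]
      constructor
      · rintro ⟨hlt, hpadj⟩
        by_cases h1 : p.1 = v
        · left
          have h2 : p.2 = u := hleaf _ (h1 ▸ hpadj)
          have hvu : v < u := h1 ▸ h2 ▸ hlt
          rw [hp0def, if_neg (asymm hvu)]
          exact Prod.ext h1 h2
        · by_cases h2 : p.2 = v
          · left
            have h1' : p.1 = u := hleaf _ (h2 ▸ hpadj.symm)
            have huv : u < v := h1' ▸ h2 ▸ hlt
            rw [hp0def, if_pos huv]
            exact Prod.ext h1' h2
          · right
            obtain ⟨i, hi⟩ := Fin.exists_succAbove_eq h1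
            obtain ⟨j, hj⟩ := Fin.exists_succAbove_eq h2
            refine ⟨(i, j), ⟨?_, ?_⟩, ?_⟩
            · rw [← Fin.succAbove_lt_succAbove_iff (p := v), hi, hj]; exact hlt
            · show T.Adj (v.succAbove i) (v.succAbove j)
              rw [hi, hj]; exact hpadj
            · show (v.succAbove i, v.succAbove j) = p
              rw [hi, hj]
      · rintro (rfl | ⟨q, ⟨hlt, hqadj⟩, rfl⟩)
        · by_cases huv : u < v
          · rw [hp0def, if_pos huv]
            exact ⟨huv, hadj.symm⟩
          · rw [hp0def, if_neg huv]
            exact ⟨(hne.lt_or_gt.resolve_left huv), hadj⟩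
        · exact ⟨Fin.succAbove_lt_succAbove_iff.2 hlt, hqadj⟩
    have hp0nm : p0 ∉ A'.image emb := by
      intro hmem
      obtain ⟨q, -, hq⟩ := Finset.mem_image.1 hmem
      by_cases huv : u < v
      · rw [hp0def, if_pos huv] at hq
        exact Fin.succAbove_ne v q.2 (congrArg Prod.snd hq)
      · rw [hp0def, if_neg huv] at hq
        exact Fin.succAbove_ne v q.1 (congrArg Prod.fst hq)
    have hembinj : ∀ q1 ∈ A', ∀ q2 ∈ A', emb q1 = emb q2 → q1 = q2 := by
      intro q1 _ q2 _ h
      exact Prod.ext (Fin.succAbove_right_injective (congrArg Prod.fst h))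
        (Fin.succAbove_right_injective (congrArg Prod.snd h))
    -- pointwise factorization
    have hfact : ∀ (t : X) (x : Fin (k + 1) → X),
        (∏ p ∈ A, K ((v.insertNth t x : Fin (k + 1 + 1) → X) p.1) ((v.insertNth t x : Fin (k + 1 + 1) → X) p.2)) = K (x m) t * P x := by
      intro t x
      rw [hAeq, Finset.prod_insert hp0nm, Finset.prod_image hembinj]
      congr 1
      · by_cases huv : u < v
        · rw [hp0def, if_pos huv]
          show K ((v.insertNth t x : Fin (k + 1 + 1) → X) u)
              ((v.insertNth t x : Fin (k + 1 + 1) → X) v) = K (x m) t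
          rw [← hm, Fin.insertNth_apply_succAbove, Fin.insertNth_apply_same]
        · rw [hp0def, if_neg huv]
          show K ((v.insertNth t x : Fin (k + 1 + 1) → X) v)
              ((v.insertNth t x : Fin (k + 1 + 1) → X) u) = K (x m) t
          rw [← hm, Fin.insertNth_apply_succAbove, Fin.insertNth_apply_same, hsym]
      · refine Finset.prod_congr rfl fun q _ => ?_
        show K ((v.insertNth t x : Fin (k + 1 + 1) → X) (v.succAbove q.1))
            ((v.insertNth t x : Fin (k + 1 + 1) → X) (v.succAbove q.2)) = K (x q.1) (x q.2)
        rw [Fin.insertNth_apply_succAbove, Fin.insertNth_apply_succAbove]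
    -- measurability
    have hK2 : ∀ {α : Type} [MeasurableSpace α] (f g : α → X), Measurable f → Measurable g →
        Measurable (fun x => K (f x) (g x)) := fun f g hf hg => hK.comp (hf.prodMk hg)
    have hPm : Measurable P := by
      apply Finset.measurable_prod
      intro p _
      exact hK2 _ _ (measurable_pi_apply p.1) (measurable_pi_apply p.2)
    have hKm : ∀ y : X, Measurable (fun t => K y t) := fun y =>
      hK2 _ _ measurable_const measurable_id
    have hfm : Measurable (fun z : X × (Fin (k + 1) → X) => K (z.2 m) z.1 * P z.2) :=
      (hK2 _ _ ((measurable_pi_apply m).comp measurable_snd) measurable_fst).mul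
        (hPm.comp measurable_snd)
    have hIm : Measurable (fun x : Fin (k + 1) → X => ∫⁻ t in G, K (x m) t ∂μ) :=
      Measurable.lintegral_prod_right'
        (f := fun z : (Fin (k + 1) → X) × X => K (z.1 m) z.2)
        (hK2 _ _ ((measurable_pi_apply m).comp measurable_fst) measurable_snd)
    -- the preimage computation
    set e := MeasurableEquiv.piFinSuccAbove (fun _ : Fin (k + 1 + 1) => X) v with hedef
    have hpre : e ⁻¹' ((G : Set X) ×ˢ (Set.univ.pi fun _ : Fin (k + 1) => G)) =
        (Set.univ.pi fun _ : Fin (k + 1 + 1) => G) := by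
      ext x
      simp only [Set.mem_preimage, hedef, MeasurableEquiv.piFinSuccAbove_apply,
        Fin.insertNthEquiv_symm_apply, Set.mem_prod, Set.mem_pi, Set.mem_univ, true_implies,
        Fin.removeNth]
      exact (Fin.forall_iff_succAbove (P := fun i => x i ∈ G) v).symm
    -- the main Fubini computation
    have key : (∫⁻ x in Set.univ.pi fun _ : Fin (k + 1 + 1) => G,
          ∏ p ∈ A, K (x p.1) (x p.2) ∂(Measure.pi fun _ : Fin (k + 1 + 1) => μ))
        = ∫⁻ x in (Set.univ.pi fun _ : Fin (k + 1) => G),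
            (∫⁻ t in G, K (x m) t ∂μ) * P x ∂(Measure.pi fun _ : Fin (k + 1) => μ) := by
      have h1 := (measurePreserving_piFinSuccAbove (fun _ : Fin (k + 1 + 1) => μ)
          v).setLIntegral_comp_preimage_emb e.measurableEmbedding
        (fun z : X × (Fin (k + 1) → X) => K (z.2 m) z.1 * P z.2)
        ((G : Set X) ×ˢ (Set.univ.pi fun _ : Fin (k + 1) => G))
      rw [hpre] at h1
      calc (∫⁻ x in Set.univ.pi fun _ : Fin (k + 1 + 1) => G,
            ∏ p ∈ A, K (x p.1) (x p.2) ∂(Measure.pi fun _ : Fin (k + 1 + 1) => μ))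
          = ∫⁻ x in Set.univ.pi fun _ : Fin (k + 1 + 1) => G,
              (fun z : X × (Fin (k + 1) → X) => K (z.2 m) z.1 * P z.2) (e x)
                ∂(Measure.pi fun _ : Fin (k + 1 + 1) => μ) := by
            refine lintegral_congr fun x => ?_
            have h2 := hfact (x v) (v.removeNth x)
            rw [Fin.insertNth_self_removeNth] at h2
            exact h2
        _ = ∫⁻ z in (G : Set X) ×ˢ (Set.univ.pi fun _ : Fin (k + 1) => G),
              K (z.2 m) z.1 * P z.2 ∂(μ.prod (Measure.pi fun _ : Fin (k + 1) => μ)) := h1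
        _ = ∫⁻ x in (Set.univ.pi fun _ : Fin (k + 1) => G),
              ∫⁻ t in G, K (x m) t * P x ∂μ ∂(Measure.pi fun _ : Fin (k + 1) => μ) := by
            rw [← Measure.prod_restrict, lintegral_prod_symm _ hfm.aemeasurable]
        _ = ∫⁻ x in (Set.univ.pi fun _ : Fin (k + 1) => G),
              (∫⁻ t in G, K (x m) t ∂μ) * P x ∂(Measure.pi fun _ : Fin (k + 1) => μ) :=
            lintegral_congr fun x => lintegral_mul_const _ (hKm (x m))
    have hih := ih (T.comap v.succAbove) hT'
    constructor
    · calc a ^ (k + 1) * μ G = a * (a ^ k * μ G) := by rw [pow_succ]; ring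
        _ ≤ a * (∫⁻ x in (Set.univ.pi fun _ : Fin (k + 1) => G),
              P x ∂(Measure.pi fun _ : Fin (k + 1) => μ)) := mul_le_mul_right hih.1 a
        _ = ∫⁻ x in (Set.univ.pi fun _ : Fin (k + 1) => G),
              a * P x ∂(Measure.pi fun _ : Fin (k + 1) => μ) :=
            (lintegral_const_mul a hPm).symm
        _ ≤ ∫⁻ x in (Set.univ.pi fun _ : Fin (k + 1) => G),
              (∫⁻ t in G, K (x m) t ∂μ) * P x ∂(Measure.pi fun _ : Fin (k + 1) => μ) :=
            setLIntegral_mono (hIm.mul hPm) fun x hx =>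
              mul_le_mul_left (hbound (x m) (hx m (Set.mem_univ m))).1 (P x)
        _ = _ := key.symm
    · calc (∫⁻ x in Set.univ.pi fun _ : Fin (k + 1 + 1) => G,
            ∏ p ∈ A, K (x p.1) (x p.2) ∂(Measure.pi fun _ : Fin (k + 1 + 1) => μ))
          = ∫⁻ x in (Set.univ.pi fun _ : Fin (k + 1) => G),
              (∫⁻ t in G, K (x m) t ∂μ) * P x ∂(Measure.pi fun _ : Fin (k + 1) => μ) := key
        _ ≤ ∫⁻ x in (Set.univ.pi fun _ : Fin (k + 1) => G),
              b * P x ∂(Measure.pi fun _ : Fin (k + 1) => μ) :=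
            setLIntegral_mono (measurable_const.mul hPm) fun x hx =>
              mul_le_mul_left (hbound (x m) (hx m (Set.mem_univ m))).2 (P x)
        _ = b * (∫⁻ x in (Set.univ.pi fun _ : Fin (k + 1) => G),
              P x ∂(Measure.pi fun _ : Fin (k + 1) => μ)) := lintegral_const_mul b hPm
        _ ≤ b * (b ^ k * μ G) := mul_le_mul_right hih.2 b
        _ = b ^ (k + 1) * μ G := by rw [pow_succ]; ring


/-- Tree multilinear bound: if `K` is a nonnegative symmetric kernel with
`a ≤ ∫_G K(x,·) dμ ≤ b` for all `x ∈ G`, then for any tree `T` on `k+1`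
vertices, the multilinear integral over `G^{k+1}` of the product of `K` over
the edges of `T` is between `a^k·μ(G)` and `b^k·μ(G)`. -/
theorem stmt9 {X : Type} [MeasurableSpace X] (μ : Measure X) [IsProbabilityMeasure μ]
    (K : X → X → ℝ≥0∞) (hK : Measurable (Function.uncurry K))
    (hsym : ∀ x y, K x y = K y x)
    (G : Set X) (hG : MeasurableSet G) (hGpos : 0 < μ G)
    (a b : ℝ≥0∞) (ha : 0 < a) (hab : a ≤ b)
    (hbound : ∀ x ∈ G, a ≤ (∫⁻ y in G, K x y ∂μ) ∧ (∫⁻ y in G, K x y ∂μ) ≤ b)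
    (k : ℕ) (T : SimpleGraph (Fin (k + 1))) [DecidableRel T.Adj] (hT : T.IsTree) :
    a ^ k * μ G ≤
        (∫⁻ x in Set.univ.pi fun _ : Fin (k + 1) => G,
          ∏ p ∈ Finset.univ.filter
              (fun p : Fin (k + 1) × Fin (k + 1) => p.1 < p.2 ∧ T.Adj p.1 p.2),
            K (x p.1) (x p.2) ∂(Measure.pi fun _ : Fin (k + 1) => μ)) ∧
      (∫⁻ x in Set.univ.pi fun _ : Fin (k + 1) => G,
          ∏ p ∈ Finset.univ.filter
              (fun p : Fin (k + 1) × Fin (k + 1) => p.1 < p.2 ∧ T.Adj p.1 p.2),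
            K (x p.1) (x p.2) ∂(Measure.pi fun _ : Fin (k + 1) => μ)) ≤
        b ^ k * μ G := by
  exact tree_integral_bounds μ K hK hsym G hG a b hab hbound k T hT
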